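/- Let H be the Hilbert space of families F = (F_I), indexed by the subsets I of {1,…,n}, with each F_I ∈ L²(ℝ^m, ℂ), equipped with the inner product (F,G) = Σ_I ∫_{ℝ^m} conj(F_I(x)) G_I(x) dx. Define the Hodge operator ∗ on H by (∗F)_J = ε(∁J, J) F_{∁J} for every subset J, where ∁J is the complement of J. Then: (a) ∗ is a unitary operator on H, i.e. (∗F, ∗G) = (F,G) for all F,G; (b) ∗ is homogeneous of degree n mod 2 for the ℤ₂-grading of H by the parity of |I| (if F_I = 0 unless |I| ≡ p mod 2, then (∗F)_J = 0 unless |J| ≡ n−p mod 2); (c) for every F homogeneous of parity p, ∗(∗F) = (−1)^{(n+1)p} F. Consequently (H, ∗) satisfies all the axioms of a Hilbert superspace of parity n mod 2 (this H is L²(ℝ^{m|n}) in components). -/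

import Mathlib

open MeasureTheory Complex
open scoped Real ENNReal

noncomputable section

/-- `ε(I,J) = (−1)^{#{(i,j) ∈ I×J : i > j}}`, the signature of the shuffle permutation
ordering the concatenation of `I` and `J`. -/
def shuffleSign {n : ℕ} (I J : Finset (Fin n)) : ℤ :=
  (-1) ^ ((I ×ˢ J).filter fun p => p.2 < p.1).card

/-- The Hodge operator on component families: `(∗F)_J = ε(∁J, J) F_{∁J}`. -/
def hodgeOp {m n : ℕ} (F : Finset (Fin n) → (Fin m → ℝ) → ℂ) :
    Finset (Fin n) → (Fin m → ℝ) → ℂ := fun J x =>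
  ((shuffleSign Jᶜ J : ℤ) : ℂ) * F Jᶜ x

/-- `F` is homogeneous of parity `p`: `F_I = 0` unless `|I| ≡ p (mod 2)`. -/
def IsHomogeneous {m n : ℕ} (F : Finset (Fin n) → (Fin m → ℝ) → ℂ) (p : ℕ) : Prop :=
  ∀ I : Finset (Fin n), ((I.card : ℤ) % 2 ≠ (p : ℤ) % 2) → F I = 0

/-- On the Hilbert space `H = L²(ℝ^{m|n})` of families `F = (F_I)_I`,
`F_I ∈ L²(ℝ^m)`, with inner product `(F,G) = Σ_I ∫ conj(F_I) G_I`, the Hodge operator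
`(∗F)_J = ε(∁J,J) F_{∁J}` is (a) unitary, (b) homogeneous of degree `n mod 2` for the
`ℤ₂`-grading by parity of `|I|`, and (c) satisfies `∗∗F = (−1)^{(n+1)p} F` on elements of
parity `p`; hence `(H,∗)` is a Hilbert superspace of parity `n mod 2`. -/
lemma neg_one_pow_parity (a b : ℕ) (h : a % 2 = b % 2) : ((-1 : ℂ)) ^ a = (-1) ^ b := by
  rw [← Nat.div_add_mod a 2, ← Nat.div_add_mod b 2, pow_add, pow_add, pow_mul, pow_mul, h]
  norm_num

lemma shuffleSign_mul_symm {n : ℕ} (J : Finset (Fin n)) :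
    ((shuffleSign Jᶜ J : ℤ) : ℂ) * ((shuffleSign J Jᶜ : ℤ) : ℂ) =
      (-1) ^ (Jᶜ.card * J.card) := by
  have hcards : ((Jᶜ ×ˢ J).filter fun p => p.2 < p.1).card +
      ((J ×ˢ Jᶜ).filter fun p => p.2 < p.1).card = Jᶜ.card * J.card := by
    have he : ((J ×ˢ Jᶜ).filter fun p => p.2 < p.1).card =
        ((Jᶜ ×ˢ J).filter fun p => p.1 < p.2).card := by
      apply Finset.card_bij (fun p _ => (p.2, p.1))
      · rintro ⟨a, b⟩ hp
        simp only [Finset.mem_filter, Finset.mem_product] at hp ⊢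
        exact ⟨⟨hp.1.2, hp.1.1⟩, hp.2⟩
      · rintro ⟨a, b⟩ _ ⟨c, d⟩ _ h
        simpa [Prod.ext_iff, and_comm] using h
      · rintro ⟨a, b⟩ hp
        simp only [Finset.mem_filter, Finset.mem_product] at hp ⊢
        exact ⟨(b, a), ⟨⟨hp.1.2, hp.1.1⟩, hp.2⟩, rfl⟩
    rw [he]
    have hf : ((Jᶜ ×ˢ J).filter fun p => p.1 < p.2) =
        ((Jᶜ ×ˢ J).filter fun p => ¬ p.2 < p.1) := by
      apply Finset.filter_congr
      rintro ⟨a, b⟩ hp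
      simp only [Finset.mem_product, Finset.mem_compl] at hp
      have hab : a ≠ b := fun h => hp.1 (h ▸ hp.2)
      constructor
      · intro h; simp; exact le_of_lt h
      · intro h; simp at h; exact lt_of_le_of_ne h hab
    rw [hf, Finset.card_filter_add_card_filter_not, Finset.card_product]
  simp only [shuffleSign]
  push_cast
  rw [← pow_add, hcards]

theorem hodge_hilbert_superspace (m n : ℕ)
    (F G : Finset (Fin n) → (Fin m → ℝ) → ℂ)
    (hF : ∀ I, MemLp (F I) 2 (volume : Measure (Fin m → ℝ)))
    (hG : ∀ I, MemLp (G I) 2 (volume : Measure (Fin m → ℝ))) :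
    (∑ J : Finset (Fin n), ∫ x : Fin m → ℝ,
        (starRingEnd ℂ) (hodgeOp F J x) * hodgeOp G J x =
      ∑ I : Finset (Fin n), ∫ x : Fin m → ℝ, (starRingEnd ℂ) (F I x) * G I x) ∧
    (∀ p : ℕ, IsHomogeneous F p →
      ∀ J : Finset (Fin n), ((J.card : ℤ) % 2 ≠ ((n : ℤ) - (p : ℤ)) % 2) →
        hodgeOp F J = 0) ∧
    (∀ p : ℕ, IsHomogeneous F p →
      ∀ (J : Finset (Fin n)) (x : Fin m → ℝ),
        hodgeOp (hodgeOp F) J x = ((-1 : ℂ)) ^ ((n + 1) * p) * F J x) := by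
  refine ⟨?_, ?_, ?_⟩
  · -- (a)
    have hterm : ∀ J : Finset (Fin n), ∀ x,
        (starRingEnd ℂ) (hodgeOp F J x) * hodgeOp G J x =
        (starRingEnd ℂ) (F Jᶜ x) * G Jᶜ x := by
      intro J x
      simp only [hodgeOp, shuffleSign, map_mul]
      push_cast
      rw [map_pow, map_neg, map_one]
      ring_nf
      rw [pow_mul', neg_one_sq, one_pow, mul_one]
    calc ∑ J : Finset (Fin n), ∫ x : Fin m → ℝ,
          (starRingEnd ℂ) (hodgeOp F J x) * hodgeOp G J x
        = ∑ J : Finset (Fin n), ∫ x : Fin m → ℝ,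
          (starRingEnd ℂ) (F Jᶜ x) * G Jᶜ x := by
          exact Finset.sum_congr rfl fun J _ => by
            exact integral_congr_ae (Filter.Eventually.of_forall (hterm J))
      _ = ∑ I : Finset (Fin n), ∫ x : Fin m → ℝ,
          (starRingEnd ℂ) (F I x) * G I x := by
          exact Fintype.sum_equiv (Function.Involutive.toPerm _ compl_compl)
            _ _ (fun J => rfl)
  · -- (b)
    intro p hFp J hJ
    have hc : Jᶜ.card = n - J.card := by
      rw [Finset.card_compl, Fintype.card_fin]
    have hle : J.card ≤ n := by
      simpa using Finset.card_le_card (Finset.subset_univ J)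
    have : F Jᶜ = 0 := by
      apply hFp
      rw [hc]
      intro h
      apply hJ
      omega
    funext x
    simp [hodgeOp, this]
  · -- (c)
    intro p hFp J x
    simp only [hodgeOp, compl_compl, ← mul_assoc]
    rw [shuffleSign_mul_symm]
    by_cases hJp : ((J.card : ℤ) % 2 = (p : ℤ) % 2)
    · congr 1
      apply neg_one_pow_parity
      have hc : Jᶜ.card = n - J.card := by
        rw [Finset.card_compl, Fintype.card_fin]
      have hle : J.card ≤ n := by
        simpa using Finset.card_le_card (Finset.subset_univ J)
      have hcp : J.card % 2 = p % 2 := by omega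
      rw [hc, Nat.mul_mod, Nat.mul_mod ((n+1)) p, hcp]
      have h1 : (n - J.card) % 2 = (n + J.card) % 2 := by omega
      rw [h1]
      rcases Nat.mod_two_eq_zero_or_one p with hp | hp
      · simp [hp]
      · have : (n + J.card) % 2 = (n + 1) % 2 := by omega
        rw [this]
    · rw [hFp J hJp]
      simp
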